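/- For all complex numbers x, y with |x| < 1 and |y| < 1, one has (1 + (Σ_{j∈ℤ} (−1)ʲ x^{j²})·(Σ_{k∈ℤ} (−1)ᵏ y^{k²}))/2 = Σ_{(j,k)} (x^{j²} − x^{(j+1)²})·(y^{k²} − y^{(k+1)²}), where the right-hand sum runs over all pairs of nonnegative integers (j,k) with j ≡ k (mod 2), and all series converge absolutely. -/

import Mathlib

section aux

variable {z : ℂ}

lemma aux_sumnorm (hz : ‖z‖ < 1) : Summable (fun n : ℕ => ‖z‖ ^ (n ^ 2)) := by
  refine Summable.of_nonneg_of_le (fun n => by positivity) (fun n => ?_)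
    (summable_geometric_of_lt_one (norm_nonneg z) hz)
  exact pow_le_pow_of_le_one (norm_nonneg z) hz.le (Nat.le_self_pow two_ne_zero n)

lemma aux_sum1 (hz : ‖z‖ < 1) : Summable (fun n : ℕ => z ^ (n ^ 2)) := by
  refine Summable.of_norm ?_
  simpa [norm_pow] using aux_sumnorm hz

lemma aux_sumshift (hz : ‖z‖ < 1) : Summable (fun n : ℕ => z ^ ((n + 1) ^ 2)) :=
  (summable_nat_add_iff (f := fun n : ℕ => z ^ (n ^ 2)) 1).mpr (aux_sum1 hz)

lemma aux_sumF (hz : ‖z‖ < 1) :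
    Summable (fun n : ℕ => z ^ (n ^ 2) - z ^ ((n + 1) ^ 2)) :=
  (aux_sum1 hz).sub (aux_sumshift hz)

lemma aux_sumG (hz : ‖z‖ < 1) :
    Summable (fun n : ℕ => (-1 : ℂ) ^ n * (z ^ (n ^ 2) - z ^ ((n + 1) ^ 2))) := by
  refine Summable.of_norm ?_
  have := (aux_sumF hz).norm
  simpa [norm_mul, norm_pow, norm_neg, norm_one] using this

lemma aux_tele (hz : ‖z‖ < 1) : ∑' n : ℕ, (z ^ (n ^ 2) - z ^ ((n + 1) ^ 2)) = 1 := by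
  have h1 := aux_sum1 hz
  have h2 := aux_sumshift hz
  have h0 := Summable.tsum_eq_zero_add h1
  rw [Summable.tsum_sub h1 h2]
  rw [zero_pow two_ne_zero, pow_zero] at h0
  rw [h0]
  ring_nf

lemma aux_sumg (hz : ‖z‖ < 1) : Summable (fun n : ℕ => (-1 : ℂ) ^ n * z ^ (n ^ 2)) := by
  refine Summable.of_norm ?_
  simpa [norm_mul, norm_pow, norm_neg, norm_one] using aux_sumnorm hz

lemma aux_cast1 :
    (fun n : ℕ => (-1 : ℂ) ^ (n : ℤ) * z ^ ((n : ℤ) ^ 2))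
      = fun n : ℕ => (-1 : ℂ) ^ n * z ^ (n ^ 2) := by
  funext n
  rw [show ((n : ℤ)) ^ 2 = ((n ^ 2 : ℕ) : ℤ) by push_cast; ring, zpow_natCast, zpow_natCast]

lemma aux_cast2 :
    (fun n : ℕ => (-1 : ℂ) ^ (-(n + 1) : ℤ) * z ^ ((-(n + 1) : ℤ) ^ 2))
      = fun n : ℕ => (-1 : ℂ) ^ (n + 1) * z ^ ((n + 1) ^ 2) := by
  funext n
  rw [show ((-(n + 1) : ℤ)) ^ 2 = (((n + 1) ^ 2 : ℕ) : ℤ) by push_cast; ring, zpow_natCast]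
  congr 1
  rw [zpow_neg, show ((n : ℤ) + 1) = ((n + 1 : ℕ) : ℤ) by push_cast; ring, zpow_natCast]
  rw [← inv_pow, inv_neg, inv_one]

lemma aux_zsum (hz : ‖z‖ < 1) :
    Summable (fun j : ℤ => (-1 : ℂ) ^ j * z ^ (j ^ 2)) := by
  apply Summable.of_nat_of_neg_add_one
  · rw [show (fun n : ℕ => (-1 : ℂ) ^ (n : ℤ) * z ^ ((n : ℤ) ^ 2)) = _ from aux_cast1]
    exact aux_sumg hz
  · rw [show (fun n : ℕ => (-1 : ℂ) ^ (-(n + 1) : ℤ) * z ^ ((-(n + 1) : ℤ) ^ 2)) = _ from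
      aux_cast2]
    exact (summable_nat_add_iff (f := fun n : ℕ => (-1 : ℂ) ^ n * z ^ (n ^ 2)) 1).mpr
      (aux_sumg hz)

lemma aux_signed (hz : ‖z‖ < 1) :
    ∑' n : ℕ, (-1 : ℂ) ^ n * (z ^ (n ^ 2) - z ^ ((n + 1) ^ 2))
      = ∑' j : ℤ, (-1 : ℂ) ^ j * z ^ (j ^ 2) := by
  have hg := aux_sumg hz
  have hg1 : Summable (fun n : ℕ => (-1 : ℂ) ^ (n + 1) * z ^ ((n + 1) ^ 2)) :=
    (summable_nat_add_iff (f := fun n : ℕ => (-1 : ℂ) ^ n * z ^ (n ^ 2)) 1).mpr hg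
  have hR : ∑' j : ℤ, (-1 : ℂ) ^ j * z ^ (j ^ 2)
      = (∑' n : ℕ, (-1 : ℂ) ^ (n : ℤ) * z ^ ((n : ℤ) ^ 2))
        + ∑' n : ℕ, (-1 : ℂ) ^ (-(n + 1) : ℤ) * z ^ ((-(n + 1) : ℤ) ^ 2) := by
    apply tsum_of_nat_of_neg_add_one
    · rw [show (fun n : ℕ => (-1 : ℂ) ^ (n : ℤ) * z ^ ((n : ℤ) ^ 2)) = _ from aux_cast1]
      exact hg
    · rw [show (fun n : ℕ => (-1 : ℂ) ^ (-(n + 1) : ℤ) * z ^ ((-(n + 1) : ℤ) ^ 2)) = _ from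
        aux_cast2]
      exact hg1
  rw [hR, aux_cast1, aux_cast2]
  have expand : (fun n : ℕ => (-1 : ℂ) ^ n * (z ^ (n ^ 2) - z ^ ((n + 1) ^ 2)))
      = fun n : ℕ => (-1 : ℂ) ^ n * z ^ (n ^ 2) + (-1 : ℂ) ^ (n + 1) * z ^ ((n + 1) ^ 2) := by
    funext n; ring
  rw [expand, Summable.tsum_add hg hg1]

end aux

/-- Character decomposition identity for the degenerate Verma modules of the `c = 1`
free boson orbifold. -/
theorem stmt_8 (x y : ℂ) (hx : ‖x‖ < 1) (hy : ‖y‖ < 1) :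
    (Summable fun j : ℤ => (-1 : ℂ) ^ j * x ^ (j ^ 2)) ∧
    (Summable fun k : ℤ => (-1 : ℂ) ^ k * y ^ (k ^ 2)) ∧
    (Summable fun p : ℕ × ℕ =>
      if p.1 % 2 = p.2 % 2 then
        (x ^ (p.1 ^ 2) - x ^ ((p.1 + 1) ^ 2)) * (y ^ (p.2 ^ 2) - y ^ ((p.2 + 1) ^ 2))
      else 0) ∧
    (1 + (∑' j : ℤ, (-1 : ℂ) ^ j * x ^ (j ^ 2)) * (∑' k : ℤ, (-1 : ℂ) ^ k * y ^ (k ^ 2))) / 2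
      = ∑' p : ℕ × ℕ,
          if p.1 % 2 = p.2 % 2 then
            (x ^ (p.1 ^ 2) - x ^ ((p.1 + 1) ^ 2)) * (y ^ (p.2 ^ 2) - y ^ ((p.2 + 1) ^ 2))
          else 0 := by
  have hFxs := aux_sumF hx
  have hFys := aux_sumF hy
  have hGxs := aux_sumG hx
  have hGys := aux_sumG hy
  -- product summabilities
  have hP1 : Summable (fun p : ℕ × ℕ =>
      (x ^ (p.1 ^ 2) - x ^ ((p.1 + 1) ^ 2)) * (y ^ (p.2 ^ 2) - y ^ ((p.2 + 1) ^ 2))) := by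
    exact summable_mul_of_summable_norm
      (f := fun n : ℕ => x ^ (n ^ 2) - x ^ ((n + 1) ^ 2))
      (g := fun n : ℕ => y ^ (n ^ 2) - y ^ ((n + 1) ^ 2)) hFxs.norm hFys.norm
  have hP2 : Summable (fun p : ℕ × ℕ =>
      ((-1 : ℂ) ^ p.1 * (x ^ (p.1 ^ 2) - x ^ ((p.1 + 1) ^ 2)))
        * ((-1 : ℂ) ^ p.2 * (y ^ (p.2 ^ 2) - y ^ ((p.2 + 1) ^ 2)))) := by
    exact summable_mul_of_summable_norm
      (f := fun n : ℕ => (-1 : ℂ) ^ n * (x ^ (n ^ 2) - x ^ ((n + 1) ^ 2)))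
      (g := fun n : ℕ => (-1 : ℂ) ^ n * (y ^ (n ^ 2) - y ^ ((n + 1) ^ 2))) hGxs.norm hGys.norm
  -- pointwise identity for the if-term
  have hpt : (fun p : ℕ × ℕ =>
      if p.1 % 2 = p.2 % 2 then
        (x ^ (p.1 ^ 2) - x ^ ((p.1 + 1) ^ 2)) * (y ^ (p.2 ^ 2) - y ^ ((p.2 + 1) ^ 2))
      else 0)
      = fun p : ℕ × ℕ =>
        ((x ^ (p.1 ^ 2) - x ^ ((p.1 + 1) ^ 2)) * (y ^ (p.2 ^ 2) - y ^ ((p.2 + 1) ^ 2))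
          + ((-1 : ℂ) ^ p.1 * (x ^ (p.1 ^ 2) - x ^ ((p.1 + 1) ^ 2)))
            * ((-1 : ℂ) ^ p.2 * (y ^ (p.2 ^ 2) - y ^ ((p.2 + 1) ^ 2)))) / 2 := by
    funext p
    obtain ⟨j, k⟩ := p
    have e : ∀ m : ℕ, (-1 : ℂ) ^ m = if m % 2 = 0 then 1 else -1 := by
      intro m
      rcases Nat.even_or_odd m with h | h
      · simp [Nat.even_iff.mp h, h.neg_one_pow]
      · simp [Nat.odd_iff.mp h, h.neg_one_pow]
    simp only [e]
    rcases Nat.mod_two_eq_zero_or_one j with hj | hj <;>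
      rcases Nat.mod_two_eq_zero_or_one k with hk | hk <;>
      simp only [hj, hk] <;> norm_num <;> ring
  have hsum3 : Summable (fun p : ℕ × ℕ =>
      if p.1 % 2 = p.2 % 2 then
        (x ^ (p.1 ^ 2) - x ^ ((p.1 + 1) ^ 2)) * (y ^ (p.2 ^ 2) - y ^ ((p.2 + 1) ^ 2))
      else 0) := by
    rw [hpt]
    exact (hP1.add hP2).div_const 2
  refine ⟨aux_zsum hx, aux_zsum hy, hsum3, ?_⟩
  rw [hpt, tsum_div_const, Summable.tsum_add hP1 hP2,
    ← tsum_mul_tsum_of_summable_norm hFxs.norm hFys.norm,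
    ← tsum_mul_tsum_of_summable_norm hGxs.norm hGys.norm,
    aux_tele hx, aux_tele hy, aux_signed hx, aux_signed hy]
  ring
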